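/- If C : {0,1}^n → ({0,1}^ℓ)^m is a (2, c, ε)-smooth code using b bits, then C is a (1, c, ε/2^b)-quantum smooth code using b bits: for each i ∈ [n] there exists a finitely supported probability distribution over tuples (j0, j1, S0, S1, (E0, E1)) satisfying the quantum-smooth-code conditions with parameters (1, c, ε/2^b); moreover it can be taken to use the same distribution over (j0, j1, S0, S1) as the classical decoder. -/

import Mathlib

open ComplexOrder Matrix

/-- A decoding tuple `(j0, j1, S0, S1, f)` for a 2-query decoder: two query positions,
two sets of answer bits, and an output function (taking the full `ℓ`-bit answers;
the requirement that it only depends on the bits in `S0`/`S1` is `DecTuple.Valid`). -/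
structure DecTuple (m ℓ : ℕ) where
  j0 : Fin m
  j1 : Fin m
  S0 : Finset (Fin ℓ)
  S1 : Finset (Fin ℓ)
  f : (Fin ℓ → Bool) → (Fin ℓ → Bool) → Bool
deriving DecidableEq

/-- Decoding tuples form a finite type. -/
def DecTuple.equivProd (m ℓ : ℕ) :
    (Fin m × Fin m × Finset (Fin ℓ) × Finset (Fin ℓ) ×
      ((Fin ℓ → Bool) → (Fin ℓ → Bool) → Bool)) ≃ DecTuple m ℓ where
  toFun p := ⟨p.1, p.2.1, p.2.2.1, p.2.2.2.1, p.2.2.2.2⟩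
  invFun ω := ⟨ω.j0, ω.j1, ω.S0, ω.S1, ω.f⟩
  left_inv _ := rfl
  right_inv _ := rfl

instance (m ℓ : ℕ) : Fintype (DecTuple m ℓ) :=
  Fintype.ofEquiv _ (DecTuple.equivProd m ℓ)

/-- A decoding tuple is valid for `b` used bits if the two queried positions are
distinct, the two sets have size `b`, and the output function depends only on the
answer bits in `S0` resp. `S1`. -/
def DecTuple.Valid {m ℓ : ℕ} (b : ℕ) (ω : DecTuple m ℓ) : Prop :=
  ω.j0 ≠ ω.j1 ∧ ω.S0.card = b ∧ ω.S1.card = b ∧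
    ∀ a0 a1 a0' a1' : Fin ℓ → Bool,
      (∀ k ∈ ω.S0, a0 k = a0' k) → (∀ k ∈ ω.S1, a1 k = a1' k) →
        ω.f a0 a1 = ω.f a0' a1'

/-- `D` is a distribution over decoding tuples witnessing that `C` is a
`(2, c, ε)`-smooth code using `b` bits at index `i`. -/
def IsSmoothDecoder {n m ℓ : ℕ} (b : ℕ) (c ε : ℝ)
    (C : (Fin n → Bool) → Fin m → Fin ℓ → Bool) (i : Fin n)
    (D : DecTuple m ℓ → ℝ) : Prop :=
  (∀ ω, 0 ≤ D ω) ∧ (∑ ω, D ω = 1) ∧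
  (∀ ω, D ω ≠ 0 → ω.Valid b) ∧
  (∀ x, 1 / 2 + ε ≤
    ∑ ω ∈ Finset.univ.filter
      (fun ω : DecTuple m ℓ => ω.f (C x ω.j0) (C x ω.j1) = x i), D ω) ∧
  (∀ j : Fin m,
    ∑ ω ∈ Finset.univ.filter
      (fun ω : DecTuple m ℓ => ω.j0 = j ∨ ω.j1 = j), D ω ≤ c / m)

/-- `C : {0,1}^n → ({0,1}^ℓ)^m` is a `(2, c, ε)`-smooth code using `b` bits. -/
def IsSmoothCode (n m ℓ b : ℕ) (c ε : ℝ)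
    (C : (Fin n → Bool) → Fin m → Fin ℓ → Bool) : Prop :=
  ∀ i : Fin n, ∃ D : DecTuple m ℓ → ℝ, IsSmoothDecoder b c ε C i D

/-- A quantum decoding tuple `(j0, j1, S0, S1)`: the two query positions and the two
sets of answer bits used. -/
structure QTuple (m ℓ : ℕ) where
  j0 : Fin m
  j1 : Fin m
  S0 : Finset (Fin ℓ)
  S1 : Finset (Fin ℓ)
deriving DecidableEq

/-- Quantum decoding tuples form a finite type. -/
def QTuple.equivProd (m ℓ : ℕ) :
    (Fin m × Fin m × Finset (Fin ℓ) × Finset (Fin ℓ)) ≃ QTuple m ℓ where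
  toFun p := ⟨p.1, p.2.1, p.2.2.1, p.2.2.2⟩
  invFun ω := ⟨ω.j0, ω.j1, ω.S0, ω.S1⟩
  left_inv _ := rfl
  right_inv _ := rfl

instance (m ℓ : ℕ) : Fintype (QTuple m ℓ) :=
  Fintype.ofEquiv _ (QTuple.equivProd m ℓ)

/-- `χ T a = (-1)^{T · a}`, the sign given by the inner product mod 2 of the
characteristic vector of `T` with the bit string `a`. -/
noncomputable def chi {ℓ : ℕ} (T : Finset (Fin ℓ)) (a : Fin ℓ → Bool) : ℂ :=
  (-1) ^ (T.filter fun k => a k = true).card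

/-- The state resulting from the quantum query
`Q = (1/√2)(|j0⟩ ⊗ 2^{-b/2} Σ_{T ⊆ S0} (-1)^{T·y_{j0}} |T⟩
          + |j1⟩ ⊗ 2^{-b/2} Σ_{T ⊆ S1} (-1)^{T·y_{j1}} |T⟩)`
to the string `y : ({0,1}^ℓ)^m`, as a vector in `ℂ^m ⊗ ℂ^{2^ℓ}` (indexed by the
standard basis `Fin m × Finset (Fin ℓ)`). -/
noncomputable def Qvec {m ℓ : ℕ} (b : ℕ) (j0 j1 : Fin m) (S0 S1 : Finset (Fin ℓ))
    (y : Fin m → Fin ℓ → Bool) : Fin m × Finset (Fin ℓ) → ℂ :=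
  fun p =>
    ((1 / (Real.sqrt 2 * Real.sqrt (2 ^ b)) : ℝ) : ℂ) *
      ((if p.1 = j0 ∧ p.2 ⊆ S0 then chi p.2 (y j0) else 0) +
       (if p.1 = j1 ∧ p.2 ⊆ S1 then chi p.2 (y j1) else 0))

/-- `D` (a distribution over quantum decoding tuples) together with the POVMs `E`
witnesses that `C` is a `(1, c, ε)`-quantum smooth code using `b` bits at index `i`. -/
def IsQSCDecoder {n m ℓ : ℕ} (b : ℕ) (c ε : ℝ)
    (C : (Fin n → Bool) → Fin m → Fin ℓ → Bool) (i : Fin n)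
    (D : QTuple m ℓ → ℝ)
    (E : QTuple m ℓ → Bool →
      Matrix (Fin m × Finset (Fin ℓ)) (Fin m × Finset (Fin ℓ)) ℂ) : Prop :=
  (∀ ω, 0 ≤ D ω) ∧ (∑ ω, D ω = 1) ∧
  (∀ ω, D ω ≠ 0 → ω.j0 ≠ ω.j1 ∧ ω.S0.card = b ∧ ω.S1.card = b ∧
    (E ω false).PosSemidef ∧ (E ω true).PosSemidef ∧ E ω false + E ω true = 1) ∧
  (∀ x, 1 / 2 + ε ≤
    ∑ ω, D ω *
      (star (Qvec b ω.j0 ω.j1 ω.S0 ω.S1 (C x)) ⬝ᵥ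
        (E ω (x i) *ᵥ Qvec b ω.j0 ω.j1 ω.S0 ω.S1 (C x))).re) ∧
  (∀ j : Fin m,
    ∑ ω ∈ Finset.univ.filter
      (fun ω : QTuple m ℓ => ω.j0 = j ∨ ω.j1 = j), D ω ≤ c / m)

/-- `C : {0,1}^n → ({0,1}^ℓ)^m` is a `(1, c, ε)`-quantum smooth code using `b` bits. -/
def IsQSC (n m ℓ b : ℕ) (c ε : ℝ)
    (C : (Fin n → Bool) → Fin m → Fin ℓ → Bool) : Prop :=
  ∀ i : Fin n, ∃ (D : QTuple m ℓ → ℝ)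
    (E : QTuple m ℓ → Bool →
      Matrix (Fin m × Finset (Fin ℓ)) (Fin m × Finset (Fin ℓ)) ℂ),
    IsQSCDecoder b c ε C i D E

/-- The underlying quantum decoding tuple of a classical decoding tuple
(forgetting the output function). -/
def DecTuple.toQ {m ℓ : ℕ} (ω : DecTuple m ℓ) : QTuple m ℓ :=
  ⟨ω.j0, ω.j1, ω.S0, ω.S1⟩


section ChiLemmas

variable {ℓ : ℕ}


/-- indicator string of a set -/
def indF {ℓ : ℕ} (A : Finset (Fin ℓ)) : Fin ℓ → Bool := fun k => decide (k ∈ A)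

noncomputable def chiP {ℓ : ℕ} (a : Fin ℓ → Bool) (k : Fin ℓ) : ℂ := if a k then -1 else 1

lemma chi_eq_prod (T : Finset (Fin ℓ)) (a : Fin ℓ → Bool) :
    chi T a = ∏ k ∈ T, chiP a k := by
  unfold chi chiP
  rw [Finset.prod_ite, Finset.prod_const, Finset.prod_const, one_pow, mul_one]

lemma star_chi (T : Finset (Fin ℓ)) (a : Fin ℓ → Bool) :
    starRingEnd ℂ (chi T a) = chi T a := by
  unfold chi
  rw [map_pow, map_neg, _root_.map_one]

lemma chi_mul_chi (T : Finset (Fin ℓ)) (a a' : Fin ℓ → Bool) :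
    chi T a * chi T a' = ∏ k ∈ T, (chiP a k * chiP a' k) := by
  rw [chi_eq_prod, chi_eq_prod, Finset.prod_mul_distrib]

lemma chi_sq (T : Finset (Fin ℓ)) (a : Fin ℓ → Bool) : chi T a * chi T a = 1 := by
  rw [chi_mul_chi]
  refine Finset.prod_eq_one fun k _ => ?_
  unfold chiP; split_ifs <;> norm_num

lemma sum_powerset_prod (S : Finset (Fin ℓ)) (g : Fin ℓ → ℂ) :
    ∑ T ∈ S.powerset, ∏ k ∈ T, g k = ∏ k ∈ S, (1 + g k) := by
  have := Finset.prod_add g (fun _ => (1:ℂ)) S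
  simp only [Finset.prod_const_one, mul_one] at this
  rw [← this]
  exact Finset.prod_congr rfl fun k _ => by ring

lemma orth (S : Finset (Fin ℓ)) (a a' : Fin ℓ → Bool) :
    ∑ T ∈ S.powerset, chi T a * chi T a'
      = if ∀ k ∈ S, a k = a' k then (2 : ℂ) ^ S.card else 0 := by
  rw [Finset.sum_congr rfl fun T _ => chi_mul_chi T a a', sum_powerset_prod]
  split_ifs with h
  · rw [Finset.prod_congr rfl (fun k hk => ?_), Finset.prod_const]
    have := h k hk
    unfold chiP; split_ifs <;> simp_all <;> norm_num
  · push_neg at h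
    obtain ⟨k, hk, hne⟩ := h
    refine Finset.prod_eq_zero hk ?_
    unfold chiP
    rcases ha : a k <;> rcases ha' : a' k <;> simp_all <;> norm_num

lemma chi_indF (T A : Finset (Fin ℓ)) : chi T (indF A) = (-1) ^ (T ∩ A).card := by
  unfold chi
  congr 2
  ext k
  simp [indF]

lemma chi_indF_comm (T A : Finset (Fin ℓ)) : chi T (indF A) = chi A (indF T) := by
  rw [chi_indF, chi_indF, Finset.inter_comm]

lemma orth2 (S T T' : Finset (Fin ℓ)) (hT : T ∈ S.powerset) (hT' : T' ∈ S.powerset) :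
    ∑ A ∈ S.powerset, chi T (indF A) * chi T' (indF A)
      = if T = T' then (2:ℂ) ^ S.card else 0 := by
  rw [Finset.mem_powerset] at hT hT'
  rw [Finset.sum_congr rfl fun A _ => by rw [chi_indF_comm T A, chi_indF_comm T' A], orth]
  congr 1
  simp only [eq_iff_iff]
  constructor
  · intro h
    ext k
    constructor
    · intro hk
      have := h k (hT hk)
      simp [indF, hk] at this
      exact this
    · intro hk
      have := h k (hT' hk)
      simp [indF, hk] at this
      exact this
  · rintro rfl _ _; rfl

end ChiLemmas

section SumLemmas

variable {m ℓ : ℕ}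

lemma sum_pair (j : Fin m) (S : Finset (Fin ℓ)) (F : Fin m × Finset (Fin ℓ) → ℂ) :
    ∑ p : Fin m × Finset (Fin ℓ), (if p.1 = j ∧ p.2 ⊆ S then F p else 0)
      = ∑ T ∈ S.powerset, F (j, T) := by
  rw [Fintype.sum_prod_type_right]
  simp only [ite_and, Finset.sum_ite_eq', Finset.mem_univ, if_true,
    ← Finset.mem_powerset, Finset.sum_ite_mem, Finset.univ_inter]

lemma sum_pair2 (j j' : Fin m) (S S' : Finset (Fin ℓ))
    (F : (Fin m × Finset (Fin ℓ)) → (Fin m × Finset (Fin ℓ)) → ℂ) :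
    ∑ p : Fin m × Finset (Fin ℓ), ∑ q : Fin m × Finset (Fin ℓ),
      (if p.1 = j ∧ q.1 = j' ∧ p.2 ⊆ S ∧ q.2 ⊆ S' then F p q else 0)
    = ∑ T ∈ S.powerset, ∑ T' ∈ S'.powerset, F (j, T) (j', T') := by
  have h1 : ∀ p q : Fin m × Finset (Fin ℓ),
      (if p.1 = j ∧ q.1 = j' ∧ p.2 ⊆ S ∧ q.2 ⊆ S' then F p q else 0)
        = if p.1 = j ∧ p.2 ⊆ S then (if q.1 = j' ∧ q.2 ⊆ S' then F p q else 0) else 0 := by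
    intro p q
    split_ifs with h1 h2 h3 <;> first | rfl | (exfalso; tauto)
  simp_rw [h1]
  have h2 : ∀ p : Fin m × Finset (Fin ℓ),
      (∑ q : Fin m × Finset (Fin ℓ),
        if p.1 = j ∧ p.2 ⊆ S then (if q.1 = j' ∧ q.2 ⊆ S' then F p q else 0) else 0)
      = if p.1 = j ∧ p.2 ⊆ S
          then (∑ q : Fin m × Finset (Fin ℓ), if q.1 = j' ∧ q.2 ⊆ S' then F p q else 0)
          else 0 := by
    intro p; split_ifs <;> simp
  rw [Finset.sum_congr rfl fun p _ => h2 p, sum_pair j S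
    (fun p => ∑ q : Fin m × Finset (Fin ℓ), if q.1 = j' ∧ q.2 ⊆ S' then F p q else 0)]
  exact Finset.sum_congr rfl fun T _ => sum_pair j' S' _

lemma sum_swap4 {α β γ δ M : Type*} [AddCommMonoid M] (s : Finset α) (t : Finset β)
    (u : Finset γ) (w : Finset δ) (f : α → β → γ → δ → M) :
    ∑ a ∈ s, ∑ b ∈ t, ∑ c ∈ u, ∑ d ∈ w, f a b c d
      = ∑ c ∈ u, ∑ d ∈ w, ∑ a ∈ s, ∑ b ∈ t, f a b c d := by
  calc ∑ a ∈ s, ∑ b ∈ t, ∑ c ∈ u, ∑ d ∈ w, f a b c d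
      = ∑ a ∈ s, ∑ c ∈ u, ∑ b ∈ t, ∑ d ∈ w, f a b c d :=
        Finset.sum_congr rfl fun a _ => Finset.sum_comm
    _ = ∑ c ∈ u, ∑ a ∈ s, ∑ b ∈ t, ∑ d ∈ w, f a b c d := Finset.sum_comm
    _ = ∑ c ∈ u, ∑ a ∈ s, ∑ d ∈ w, ∑ b ∈ t, f a b c d :=
        Finset.sum_congr rfl fun c _ => Finset.sum_congr rfl fun a _ => Finset.sum_comm
    _ = ∑ c ∈ u, ∑ d ∈ w, ∑ a ∈ s, ∑ b ∈ t, f a b c d :=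
        Finset.sum_congr rfl fun c _ => Finset.sum_comm

end SumLemmas

noncomputable section FhatSection

variable {m ℓ : ℕ}

/-- the ±1 value of a bit -/
def Fval (v : Bool) : ℝ := if v then 1 else -1

lemma Fval_sq (v : Bool) : (Fval v : ℂ) * (Fval v : ℂ) = 1 := by
  cases v <;> norm_num [Fval]

/-- Fourier coefficients of the output function of a decoding tuple. -/
def Fhat (ω : DecTuple m ℓ) (T0 T1 : Finset (Fin ℓ)) : ℂ :=
  ((2:ℂ) ^ (ω.S0.card + ω.S1.card))⁻¹ *
    ∑ A0 ∈ ω.S0.powerset, ∑ A1 ∈ ω.S1.powerset,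
      (Fval (ω.f (indF A0) (indF A1)) : ℂ) * (chi T0 (indF A0) * chi T1 (indF A1))

lemma star_Fhat (ω : DecTuple m ℓ) (T0 T1 : Finset (Fin ℓ)) :
    starRingEnd ℂ (Fhat ω T0 T1) = Fhat ω T0 T1 := by
  unfold Fhat
  rw [_root_.map_mul, map_inv₀, map_pow, map_ofNat, map_sum]
  congr 1
  refine Finset.sum_congr rfl fun A0 _ => ?_
  rw [map_sum]
  refine Finset.sum_congr rfl fun A1 _ => ?_
  rw [_root_.map_mul, _root_.map_mul, Complex.conj_ofReal, star_chi, star_chi]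

/-- The Hermitian "sign" observable built from the Fourier coefficients of `ω.f`. -/
def Gmat (ω : DecTuple m ℓ) :
    Matrix (Fin m × Finset (Fin ℓ)) (Fin m × Finset (Fin ℓ)) ℂ :=
  Matrix.of fun p q =>
    (if p.1 = ω.j0 ∧ q.1 = ω.j1 ∧ p.2 ⊆ ω.S0 ∧ q.2 ⊆ ω.S1 then Fhat ω p.2 q.2 else 0) +
    (if p.1 = ω.j1 ∧ q.1 = ω.j0 ∧ p.2 ⊆ ω.S1 ∧ q.2 ⊆ ω.S0 then Fhat ω q.2 p.2 else 0)

lemma Gmat_herm (ω : DecTuple m ℓ) : (Gmat ω).IsHermitian := by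
  ext p q
  simp only [Matrix.conjTranspose_apply, Gmat, Matrix.of_apply, star_add, RCLike.star_def,
    apply_ite (starRingEnd ℂ), map_zero, star_Fhat]
  rw [add_comm]
  congr 1
  · exact if_congr (by tauto) rfl rfl
  · exact if_congr (by tauto) rfl rfl

lemma quad (ω : DecTuple m ℓ) (u v : Fin m × Finset (Fin ℓ) → ℂ) :
    star u ⬝ᵥ (Gmat ω *ᵥ v) =
      (∑ T0 ∈ ω.S0.powerset, ∑ T1 ∈ ω.S1.powerset,
        (starRingEnd ℂ) (u (ω.j0, T0)) * (Fhat ω T0 T1 * v (ω.j1, T1))) +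
      (∑ T0 ∈ ω.S0.powerset, ∑ T1 ∈ ω.S1.powerset,
        v (ω.j0, T0) * (Fhat ω T0 T1 * (starRingEnd ℂ) (u (ω.j1, T1)))) := by
  have expand : star u ⬝ᵥ (Gmat ω *ᵥ v) =
      (∑ p : Fin m × Finset (Fin ℓ), ∑ q : Fin m × Finset (Fin ℓ),
        (if p.1 = ω.j0 ∧ q.1 = ω.j1 ∧ p.2 ⊆ ω.S0 ∧ q.2 ⊆ ω.S1 then
          (starRingEnd ℂ) (u p) * (Fhat ω p.2 q.2 * v q) else 0)) +
      (∑ p : Fin m × Finset (Fin ℓ), ∑ q : Fin m × Finset (Fin ℓ),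
        (if p.1 = ω.j1 ∧ q.1 = ω.j0 ∧ p.2 ⊆ ω.S1 ∧ q.2 ⊆ ω.S0 then
          (starRingEnd ℂ) (u p) * (Fhat ω q.2 p.2 * v q) else 0)) := by
    simp only [dotProduct, Matrix.mulVec, Gmat, Matrix.of_apply, Pi.star_apply,
      RCLike.star_def, add_mul, mul_add, Finset.sum_add_distrib, Finset.mul_sum,
      mul_ite, ite_mul, mul_zero, zero_mul]
  rw [expand, sum_pair2, sum_pair2]
  congr 1
  refine Eq.trans Finset.sum_comm ?_
  exact Finset.sum_congr rfl fun T0 _ => Finset.sum_congr rfl fun T1 _ => by ring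

/-- The key sum interchange: a bilinear pairing against `Fhat` expressed in the
Fourier-dual domain. -/
lemma Fhat_swap (ω : DecTuple m ℓ) (g0 g1 : Finset (Fin ℓ) → ℂ) :
    ∑ T0 ∈ ω.S0.powerset, ∑ T1 ∈ ω.S1.powerset, g0 T0 * (Fhat ω T0 T1 * g1 T1)
      = ((2:ℂ) ^ (ω.S0.card + ω.S1.card))⁻¹ *
          ∑ A0 ∈ ω.S0.powerset, ∑ A1 ∈ ω.S1.powerset,
            (Fval (ω.f (indF A0) (indF A1)) : ℂ) *
              ((∑ T0 ∈ ω.S0.powerset, chi T0 (indF A0) * g0 T0) *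
               (∑ T1 ∈ ω.S1.powerset, chi T1 (indF A1) * g1 T1)) := by
  have lhs : ∑ T0 ∈ ω.S0.powerset, ∑ T1 ∈ ω.S1.powerset, g0 T0 * (Fhat ω T0 T1 * g1 T1)
      = ∑ T0 ∈ ω.S0.powerset, ∑ T1 ∈ ω.S1.powerset,
          ∑ A0 ∈ ω.S0.powerset, ∑ A1 ∈ ω.S1.powerset,
          ((2:ℂ) ^ (ω.S0.card + ω.S1.card))⁻¹ *
            ((Fval (ω.f (indF A0) (indF A1)) : ℂ) *
              ((chi T0 (indF A0) * g0 T0) * (chi T1 (indF A1) * g1 T1))) := by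
    simp only [Fhat, Finset.mul_sum, Finset.sum_mul]
    exact Finset.sum_congr rfl fun T0 _ => Finset.sum_congr rfl fun T1 _ =>
      Finset.sum_congr rfl fun A0 _ => Finset.sum_congr rfl fun A1 _ => by ring
  rw [lhs, sum_swap4]
  rw [Finset.mul_sum]
  refine Finset.sum_congr rfl fun A0 _ => ?_
  rw [Finset.mul_sum]
  refine Finset.sum_congr rfl fun A1 _ => ?_
  rw [Finset.sum_mul_sum]
  rw [Finset.mul_sum, Finset.mul_sum]
  refine Finset.sum_congr rfl fun T0 _ => ?_
  rw [Finset.mul_sum, Finset.mul_sum]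

lemma parseval (S : Finset (Fin ℓ)) (w : Finset (Fin ℓ) → ℂ) :
    ∑ A ∈ S.powerset,
      (starRingEnd ℂ) (∑ T ∈ S.powerset, chi T (indF A) * w T) *
        (∑ T ∈ S.powerset, chi T (indF A) * w T)
      = (2:ℂ) ^ S.card * ∑ T ∈ S.powerset, (starRingEnd ℂ) (w T) * w T := by
  have step : ∀ A ∈ S.powerset,
      (starRingEnd ℂ) (∑ T ∈ S.powerset, chi T (indF A) * w T) *
        (∑ T ∈ S.powerset, chi T (indF A) * w T)
      = ∑ T ∈ S.powerset, ∑ T' ∈ S.powerset,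
          ((starRingEnd ℂ) (w T) * w T') * (chi T (indF A) * chi T' (indF A)) := by
    intro A _
    rw [map_sum, Finset.sum_mul_sum]
    refine Finset.sum_congr rfl fun T _ => Finset.sum_congr rfl fun T' _ => ?_
    rw [_root_.map_mul, star_chi]
    ring
  rw [Finset.sum_congr rfl step, Finset.sum_comm]
  rw [Finset.sum_congr rfl fun T hT => Finset.sum_comm]
  have inner : ∀ T ∈ S.powerset, ∑ T' ∈ S.powerset, ∑ A ∈ S.powerset,
      ((starRingEnd ℂ) (w T) * w T') * (chi T (indF A) * chi T' (indF A))
      = (2:ℂ) ^ S.card * ((starRingEnd ℂ) (w T) * w T) := by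
    intro T hT
    have : ∀ T' ∈ S.powerset, ∑ A ∈ S.powerset,
        ((starRingEnd ℂ) (w T) * w T') * (chi T (indF A) * chi T' (indF A))
        = ((starRingEnd ℂ) (w T) * w T') * (if T = T' then (2:ℂ) ^ S.card else 0) := by
      intro T' hT'
      rw [← Finset.mul_sum, orth2 S T T' hT hT']
    rw [Finset.sum_congr rfl this]
    simp only [mul_ite, mul_zero]
    rw [Finset.sum_ite_eq _ _ _, if_pos hT]
    ring
  rw [Finset.sum_congr rfl inner, ← Finset.mul_sum]

end FhatSection

noncomputable section PSDSection

variable {m ℓ : ℕ}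

lemma conj_mul_self_nonneg (z : ℂ) : 0 ≤ (starRingEnd ℂ) z * z := star_mul_self_nonneg z

lemma two_pow_inv_nonneg (k : ℕ) : 0 ≤ ((2:ℂ) ^ k)⁻¹ := by
  have : ((2:ℂ) ^ k)⁻¹ = ((((2:ℝ) ^ k)⁻¹ : ℝ) : ℂ) := by push_cast; ring
  rw [this, Complex.zero_le_real]
  positivity

lemma half_nonneg' : 0 ≤ ((2:ℂ))⁻¹ := by
  have : ((2:ℂ))⁻¹ = (((2:ℝ)⁻¹ : ℝ) : ℂ) := by push_cast; ring
  rw [this, Complex.zero_le_real]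
  norm_num

def embJ {m ℓ : ℕ} (j : Fin m) : Finset (Fin ℓ) ↪ Fin m × Finset (Fin ℓ) :=
  ⟨fun T => (j, T), fun a b h => by simpa using congrArg Prod.snd h⟩

lemma core_psd {b : ℕ} (ω : DecTuple m ℓ) (hv : ω.Valid b) (s : ℂ) (hs : s = 1 ∨ s = -1) :
    ((2:ℂ)⁻¹ • ((1 : Matrix (Fin m × Finset (Fin ℓ)) (Fin m × Finset (Fin ℓ)) ℂ)
      + s • Gmat ω)).PosSemidef := by
  obtain ⟨hj, hS0, hS1, _⟩ := hv
  have hss : s * s = 1 := by rcases hs with rfl | rfl <;> norm_num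
  have hstars : star s = s := by rcases hs with rfl | rfl <;> simp
  rw [Matrix.posSemidef_iff_dotProduct_mulVec]
  constructor
  · -- Hermitian
    have hG : (s • Gmat ω).IsHermitian := by
      unfold Matrix.IsHermitian
      rw [Matrix.conjTranspose_smul, hstars, Gmat_herm ω]
    have h1 : ((1 : Matrix _ _ ℂ) + s • Gmat ω).IsHermitian := Matrix.isHermitian_one.add hG
    unfold Matrix.IsHermitian
    rw [Matrix.conjTranspose_smul, h1]
    norm_num
  · intro v
    set P0 := ω.S0.powerset with hP0
    set P1 := ω.S1.powerset with hP1
    set α : Finset (Fin ℓ) → ℂ :=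
      fun A0 => ∑ T0 ∈ P0, chi T0 (indF A0) * v (ω.j0, T0) with hα
    set β : Finset (Fin ℓ) → ℂ :=
      fun A1 => ∑ T1 ∈ P1, chi T1 (indF A1) * v (ω.j1, T1) with hβ
    set F : Finset (Fin ℓ) → Finset (Fin ℓ) → ℂ :=
      fun A0 A1 => ((Fval (ω.f (indF A0) (indF A1))) : ℂ) with hF
    set X : ℂ := ∑ T0 ∈ P0, (starRingEnd ℂ) (v (ω.j0, T0)) * v (ω.j0, T0) with hX
    set Y : ℂ := ∑ T1 ∈ P1, (starRingEnd ℂ) (v (ω.j1, T1)) * v (ω.j1, T1) with hY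
    set N : ℂ := ∑ p : Fin m × Finset (Fin ℓ), (starRingEnd ℂ) (v p) * v p with hN
    set K : ℂ := (2:ℂ) ^ (ω.S0.card + ω.S1.card) with hK
    have hKne : K ≠ 0 := by rw [hK]; positivity
    have hKsplit : K = 2 ^ ω.S0.card * 2 ^ ω.S1.card := by rw [hK, pow_add]
    -- star α, star β expansions
    have hstarα : ∀ A0, (starRingEnd ℂ) (α A0)
        = ∑ T0 ∈ P0, chi T0 (indF A0) * (starRingEnd ℂ) (v (ω.j0, T0)) := by
      intro A0
      rw [hα, map_sum]
      exact Finset.sum_congr rfl fun T0 _ => by rw [_root_.map_mul, star_chi]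
    have hstarβ : ∀ A1, (starRingEnd ℂ) (β A1)
        = ∑ T1 ∈ P1, chi T1 (indF A1) * (starRingEnd ℂ) (v (ω.j1, T1)) := by
      intro A1
      rw [hβ, map_sum]
      exact Finset.sum_congr rfl fun T1 _ => by rw [_root_.map_mul, star_chi]
    -- the quadratic form of G in the Fourier-dual domain
    have ht : star v ⬝ᵥ (Gmat ω *ᵥ v)
        = K⁻¹ * (∑ A0 ∈ P0, ∑ A1 ∈ P1, F A0 A1 * ((starRingEnd ℂ) (α A0) * β A1))
          + K⁻¹ * (∑ A0 ∈ P0, ∑ A1 ∈ P1, F A0 A1 * (α A0 * (starRingEnd ℂ) (β A1))) := by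
      rw [quad]
      congr 1
      · rw [Fhat_swap ω (fun T0 => (starRingEnd ℂ) (v (ω.j0, T0))) (fun T1 => v (ω.j1, T1))]
        congr 1
        refine Finset.sum_congr rfl fun A0 _ => Finset.sum_congr rfl fun A1 _ => ?_
        rw [hstarα]
      · rw [show (∑ T0 ∈ ω.S0.powerset, ∑ T1 ∈ ω.S1.powerset,
            v (ω.j0, T0) * (Fhat ω T0 T1 * (starRingEnd ℂ) (v (ω.j1, T1))))
            = ∑ T0 ∈ ω.S0.powerset, ∑ T1 ∈ ω.S1.powerset,
              (fun T => v (ω.j0, T)) T0 * (Fhat ω T0 T1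
                * (fun T => (starRingEnd ℂ) (v (ω.j1, T))) T1) from rfl,
          Fhat_swap ω (fun T0 => v (ω.j0, T0)) (fun T1 => (starRingEnd ℂ) (v (ω.j1, T1)))]
        congr 1
        refine Finset.sum_congr rfl fun A0 _ => Finset.sum_congr rfl fun A1 _ => ?_
        rw [hstarβ]
    -- pointwise expansion of |γ|²
    have hγ : ∀ A0 A1,
        (starRingEnd ℂ) (α A0 + s * (F A0 A1 * β A1)) * (α A0 + s * (F A0 A1 * β A1))
          = (starRingEnd ℂ) (α A0) * α A0 + (starRingEnd ℂ) (β A1) * β A1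
            + s * (F A0 A1 * ((starRingEnd ℂ) (α A0) * β A1))
            + s * (F A0 A1 * (α A0 * (starRingEnd ℂ) (β A1))) := by
      intro A0 A1
      have hFc : (starRingEnd ℂ) (F A0 A1) = F A0 A1 := Complex.conj_ofReal _
      have hF2 : F A0 A1 * F A0 A1 = 1 := Fval_sq _
      have hsc : (starRingEnd ℂ) s = s := hstars
      rw [map_add, _root_.map_mul, _root_.map_mul, hsc, hFc]
      linear_combination (F A0 A1 * F A0 A1 * ((starRingEnd ℂ) (β A1) * β A1)) * hss
        + ((starRingEnd ℂ) (β A1) * β A1) * hF2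
    -- sum of |γ|²
    have hγsum : ∑ A0 ∈ P0, ∑ A1 ∈ P1,
        (starRingEnd ℂ) (α A0 + s * (F A0 A1 * β A1)) * (α A0 + s * (F A0 A1 * β A1))
        = K * X + K * Y
          + s * (∑ A0 ∈ P0, ∑ A1 ∈ P1, F A0 A1 * ((starRingEnd ℂ) (α A0) * β A1))
          + s * (∑ A0 ∈ P0, ∑ A1 ∈ P1, F A0 A1 * (α A0 * (starRingEnd ℂ) (β A1))) := by
      rw [Finset.sum_congr rfl fun A0 _ => Finset.sum_congr rfl fun A1 _ => hγ A0 A1]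
      simp only [Finset.sum_add_distrib]
      have e1 : ∑ A0 ∈ P0, ∑ A1 ∈ P1, (starRingEnd ℂ) (α A0) * α A0 = K * X := by
        rw [Finset.sum_congr rfl fun A0 _ => Finset.sum_const _, ← Finset.smul_sum]
        have hpar : ∑ A0 ∈ P0, (starRingEnd ℂ) (α A0) * α A0 = 2 ^ ω.S0.card * X := by
          simp only [hα]
          rw [hX, hP0]
          exact parseval ω.S0 (fun T0 => v (ω.j0, T0))
        rw [hpar, hP1, Finset.card_powerset, nsmul_eq_mul, hKsplit]
        push_cast
        ring
      have e2 : ∑ A0 ∈ P0, ∑ A1 ∈ P1, (starRingEnd ℂ) (β A1) * β A1 = K * Y := by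
        have hpar : ∑ A1 ∈ P1, (starRingEnd ℂ) (β A1) * β A1 = 2 ^ ω.S1.card * Y := by
          simp only [hβ]
          rw [hY, hP1]
          exact parseval ω.S1 (fun T1 => v (ω.j1, T1))
        rw [Finset.sum_congr rfl fun A0 _ => hpar, Finset.sum_const, hP0,
          Finset.card_powerset, nsmul_eq_mul, hKsplit]
        push_cast
        ring
      have e3 : ∀ g : Finset (Fin ℓ) → Finset (Fin ℓ) → ℂ,
          ∑ A0 ∈ P0, ∑ A1 ∈ P1, s * g A0 A1 = s * ∑ A0 ∈ P0, ∑ A1 ∈ P1, g A0 A1 := by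
        intro g
        rw [Finset.mul_sum]
        exact Finset.sum_congr rfl fun _ _ => (Finset.mul_sum _ _ _).symm
      rw [e1, e2, e3, e3]
    -- X + Y ≤ N
    have hXm : X = ∑ p ∈ P0.map (embJ ω.j0), (starRingEnd ℂ) (v p) * v p := by
      rw [Finset.sum_map]; rfl
    have hYm : Y = ∑ p ∈ P1.map (embJ ω.j1), (starRingEnd ℂ) (v p) * v p := by
      rw [Finset.sum_map]; rfl
    have hdisj : Disjoint (P0.map (embJ ω.j0)) (P1.map (embJ ω.j1)) := by
      rw [Finset.disjoint_left]
      rintro p hp0 hp1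
      simp only [Finset.mem_map, embJ, Function.Embedding.coeFn_mk] at hp0 hp1
      obtain ⟨T0, _, rfl⟩ := hp0
      obtain ⟨T1, _, hpq⟩ := hp1
      exact hj ((congrArg Prod.fst hpq).symm : ω.j0 = ω.j1)
    have hXY : X + Y ≤ N := by
      rw [hXm, hYm, ← Finset.sum_union hdisj, hN]
      exact Finset.sum_le_sum_of_subset_of_nonneg (Finset.subset_univ _)
        (fun p _ _ => conj_mul_self_nonneg _)
    -- final computation
    have hNv : star v ⬝ᵥ v = N := by
      rw [hN]
      exact Finset.sum_congr rfl fun p _ => by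
        simp [dotProduct, Pi.star_apply, RCLike.star_def]
    have hexp : star v ⬝ᵥ (((2:ℂ)⁻¹ • ((1 : Matrix (Fin m × Finset (Fin ℓ))
          (Fin m × Finset (Fin ℓ)) ℂ) + s • Gmat ω)) *ᵥ v)
        = (2:ℂ)⁻¹ * (N + s * (star v ⬝ᵥ (Gmat ω *ᵥ v))) := by
      rw [Matrix.smul_mulVec, Matrix.add_mulVec, Matrix.one_mulVec,
        Matrix.smul_mulVec, dotProduct_smul, dotProduct_add,
        dotProduct_smul, smul_eq_mul, smul_eq_mul, hNv]
    have key : N + s * (star v ⬝ᵥ (Gmat ω *ᵥ v))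
        = (N - (X + Y)) + K⁻¹ * (∑ A0 ∈ P0, ∑ A1 ∈ P1,
            (starRingEnd ℂ) (α A0 + s * (F A0 A1 * β A1))
              * (α A0 + s * (F A0 A1 * β A1))) := by
      rw [ht, hγsum]
      field_simp
      ring
    rw [hexp, key]
    have hγnn : 0 ≤ ∑ A0 ∈ P0, ∑ A1 ∈ P1,
        (starRingEnd ℂ) (α A0 + s * (F A0 A1 * β A1)) * (α A0 + s * (F A0 A1 * β A1)) :=
      Finset.sum_nonneg fun A0 _ => Finset.sum_nonneg fun A1 _ => conj_mul_self_nonneg _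
    have hKinv : 0 ≤ K⁻¹ := by rw [hK]; exact two_pow_inv_nonneg _
    exact mul_nonneg half_nonneg'
      (add_nonneg (sub_nonneg.2 hXY) (mul_nonneg hKinv hγnn))

end PSDSection

noncomputable section QSection

variable {m ℓ : ℕ}

lemma c_sq (b : ℕ) :
    ((1 / (Real.sqrt 2 * Real.sqrt (2 ^ b)) : ℝ) : ℂ) *
      ((1 / (Real.sqrt 2 * Real.sqrt (2 ^ b)) : ℝ) : ℂ)
    = ((((2:ℝ) * 2 ^ b)⁻¹ : ℝ) : ℂ) := by
  rw [← Complex.ofReal_mul]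
  congr 1
  have h2 : Real.sqrt 2 * Real.sqrt 2 = 2 := Real.mul_self_sqrt (by norm_num)
  have hb : Real.sqrt (2^b) * Real.sqrt (2^b) = (2:ℝ)^b := Real.mul_self_sqrt (by positivity)
  have key : (Real.sqrt 2 * Real.sqrt (2^b)) * (Real.sqrt 2 * Real.sqrt (2^b))
      = 2 * 2^b := by rw [mul_mul_mul_comm, h2, hb]
  rw [div_mul_div_comm, one_mul, key, one_div]

lemma star_Qvec (b : ℕ) (j0 j1 : Fin m) (S0 S1 : Finset (Fin ℓ)) (y : Fin m → Fin ℓ → Bool) :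
    star (Qvec b j0 j1 S0 S1 y) = Qvec b j0 j1 S0 S1 y := by
  funext p
  simp only [Pi.star_apply, Qvec, RCLike.star_def, _root_.map_mul, map_add, Complex.conj_ofReal,
    apply_ite (starRingEnd ℂ), map_zero, star_chi]

lemma starRingEnd_Qvec (b : ℕ) (j0 j1 : Fin m) (S0 S1 : Finset (Fin ℓ))
    (y : Fin m → Fin ℓ → Bool) (p : Fin m × Finset (Fin ℓ)) :
    (starRingEnd ℂ) (Qvec b j0 j1 S0 S1 y p) = Qvec b j0 j1 S0 S1 y p := by
  rw [← RCLike.star_def, ← Pi.star_apply, star_Qvec]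

lemma Qvec_norm {b : ℕ} (j0 j1 : Fin m) (S0 S1 : Finset (Fin ℓ)) (y : Fin m → Fin ℓ → Bool)
    (hj : j0 ≠ j1) (h0 : S0.card = b) (h1 : S1.card = b) :
    star (Qvec b j0 j1 S0 S1 y) ⬝ᵥ Qvec b j0 j1 S0 S1 y = 1 := by
  rw [star_Qvec]
  have expand : Qvec b j0 j1 S0 S1 y ⬝ᵥ Qvec b j0 j1 S0 S1 y
      = ∑ p : Fin m × Finset (Fin ℓ), Qvec b j0 j1 S0 S1 y p * Qvec b j0 j1 S0 S1 y p := rfl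
  have hsplit : ∀ p : Fin m × Finset (Fin ℓ),
      Qvec b j0 j1 S0 S1 y p * Qvec b j0 j1 S0 S1 y p
      = ((((2:ℝ) * 2 ^ b)⁻¹ : ℝ) : ℂ) *
          ((if p.1 = j0 ∧ p.2 ⊆ S0 then (1:ℂ) else 0) +
           (if p.1 = j1 ∧ p.2 ⊆ S1 then (1:ℂ) else 0)) := by
    intro p
    unfold Qvec
    by_cases hc0 : p.1 = j0 ∧ p.2 ⊆ S0 <;> by_cases hc1 : p.1 = j1 ∧ p.2 ⊆ S1
    · exact absurd (hc0.1.symm.trans hc1.1) hj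
    · rw [if_pos hc0, if_neg hc1, if_pos hc0, if_neg hc1, ← c_sq b]
      have := chi_sq p.2 (y j0)
      linear_combination ((1 / (Real.sqrt 2 * Real.sqrt (2 ^ b)) : ℝ) : ℂ) *
        ((1 / (Real.sqrt 2 * Real.sqrt (2 ^ b)) : ℝ) : ℂ) * this
    · rw [if_neg hc0, if_pos hc1, if_neg hc0, if_pos hc1, ← c_sq b]
      have := chi_sq p.2 (y j1)
      linear_combination ((1 / (Real.sqrt 2 * Real.sqrt (2 ^ b)) : ℝ) : ℂ) *
        ((1 / (Real.sqrt 2 * Real.sqrt (2 ^ b)) : ℝ) : ℂ) * this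
    · rw [if_neg hc0, if_neg hc1, if_neg hc0, if_neg hc1]
      ring
  rw [expand, Finset.sum_congr rfl fun p _ => hsplit p, ← Finset.mul_sum,
    Finset.sum_add_distrib, sum_pair j0 S0 (fun _ => (1:ℂ)), sum_pair j1 S1 (fun _ => (1:ℂ)),
    Finset.sum_const, Finset.sum_const, Finset.card_powerset, Finset.card_powerset, h0, h1,
    nsmul_eq_mul, mul_one]
  push_cast
  have h2b : ((2:ℂ) ^ b) ≠ 0 := by positivity
  field_simp
  ring

lemma inversion {b : ℕ} (ω : DecTuple m ℓ) (hv : ω.Valid b) (a0 a1 : Fin ℓ → Bool) :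
    ∑ T0 ∈ ω.S0.powerset, ∑ T1 ∈ ω.S1.powerset,
      chi T0 a0 * (Fhat ω T0 T1 * chi T1 a1) = ((Fval (ω.f a0 a1) : ℝ) : ℂ) := by
  obtain ⟨hj, h0, h1, hdep⟩ := hv
  rw [Fhat_swap ω (fun T0 => chi T0 a0) (fun T1 => chi T1 a1)]
  have hcond0 : ∀ A0 ∈ ω.S0.powerset,
      ((∀ k ∈ ω.S0, indF A0 k = a0 k) ↔ A0 = ω.S0.filter (fun k => a0 k = true)) := by
    intro A0 hA0
    rw [Finset.mem_powerset] at hA0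
    constructor
    · intro h
      ext k
      simp only [Finset.mem_filter]
      constructor
      · intro hk
        have hk0 := hA0 hk
        have := h k hk0
        simp only [indF, hk, decide_eq_true_eq] at this
        exact ⟨hk0, by simp [← this, hk]⟩
      · rintro ⟨hk0, hk1⟩
        have := h k hk0
        rw [hk1] at this
        simpa [indF] using this.symm
    · rintro rfl k hk
      simp only [indF, Finset.mem_filter, hk, true_and]
      rcases ha : a0 k <;> simp [ha]
  have hcond1 : ∀ A1 ∈ ω.S1.powerset,
      ((∀ k ∈ ω.S1, indF A1 k = a1 k) ↔ A1 = ω.S1.filter (fun k => a1 k = true)) := by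
    intro A1 hA1
    rw [Finset.mem_powerset] at hA1
    constructor
    · intro h
      ext k
      simp only [Finset.mem_filter]
      constructor
      · intro hk
        have hk0 := hA1 hk
        have := h k hk0
        simp only [indF, hk, decide_eq_true_eq] at this
        exact ⟨hk0, by simp [← this, hk]⟩
      · rintro ⟨hk0, hk1⟩
        have := h k hk0
        rw [hk1] at this
        simpa [indF] using this.symm
    · rintro rfl k hk
      simp only [indF, Finset.mem_filter, hk, true_and]
      rcases ha : a1 k <;> simp [ha]
  have hI0 : ∀ A0 ∈ ω.S0.powerset,
      (∑ T0 ∈ ω.S0.powerset, chi T0 (indF A0) * chi T0 a0)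
        = if A0 = ω.S0.filter (fun k => a0 k = true) then (2:ℂ) ^ ω.S0.card else 0 := by
    intro A0 hA0
    rw [orth]
    exact if_congr (hcond0 A0 hA0) rfl rfl
  have hI1 : ∀ A1 ∈ ω.S1.powerset,
      (∑ T1 ∈ ω.S1.powerset, chi T1 (indF A1) * chi T1 a1)
        = if A1 = ω.S1.filter (fun k => a1 k = true) then (2:ℂ) ^ ω.S1.card else 0 := by
    intro A1 hA1
    rw [orth]
    exact if_congr (hcond1 A1 hA1) rfl rfl
  rw [Finset.sum_congr rfl fun A0 hA0 => Finset.sum_congr rfl fun A1 hA1 => by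
    rw [hI0 A0 hA0, hI1 A1 hA1]]
  simp only [mul_ite, ite_mul, mul_zero, zero_mul]
  have step1 : ∀ A0 ∈ ω.S0.powerset,
      (∑ A1 ∈ ω.S1.powerset,
        if A1 = ω.S1.filter (fun k => a1 k = true) then
          (if A0 = ω.S0.filter (fun k => a0 k = true) then
            ((Fval (ω.f (indF A0) (indF A1)) : ℝ) : ℂ) *
              ((2:ℂ) ^ ω.S0.card * 2 ^ ω.S1.card)
          else 0)
        else 0)
      = if A0 = ω.S0.filter (fun k => a0 k = true) then
          ((Fval (ω.f (indF A0) (indF (ω.S1.filter (fun k => a1 k = true)))) : ℝ) : ℂ) *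
            ((2:ℂ) ^ ω.S0.card * 2 ^ ω.S1.card)
        else 0 := by
    intro A0 _
    rw [Finset.sum_ite_eq' _ _ _, if_pos (Finset.mem_powerset.2 (Finset.filter_subset _ _))]
  rw [Finset.sum_congr rfl step1, Finset.sum_ite_eq' _ _ _,
    if_pos (Finset.mem_powerset.2 (Finset.filter_subset _ _))]
  have hfeq : ω.f (indF (ω.S0.filter (fun k => a0 k = true)))
      (indF (ω.S1.filter (fun k => a1 k = true))) = ω.f a0 a1 := by
    apply hdep
    · intro k hk
      simp only [indF, Finset.mem_filter, hk, true_and]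
      rcases ha : a0 k <;> simp [ha]
    · intro k hk
      simp only [indF, Finset.mem_filter, hk, true_and]
      rcases ha : a1 k <;> simp [ha]
  rw [hfeq, pow_add]
  have hne : ((2:ℂ) ^ ω.S0.card * (2:ℂ) ^ ω.S1.card) ≠ 0 := by positivity
  field_simp

lemma Qvec_G {b : ℕ} (ω : DecTuple m ℓ) (hv : ω.Valid b) (y : Fin m → Fin ℓ → Bool) :
    star (Qvec b ω.j0 ω.j1 ω.S0 ω.S1 y) ⬝ᵥ (Gmat ω *ᵥ Qvec b ω.j0 ω.j1 ω.S0 ω.S1 y)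
      = ((((2:ℝ) ^ b)⁻¹ * Fval (ω.f (y ω.j0) (y ω.j1)) : ℝ) : ℂ) := by
  obtain ⟨hj, h0, h1, hdep⟩ := hv
  rw [quad]
  have hQ0 : ∀ T0 ∈ ω.S0.powerset, Qvec b ω.j0 ω.j1 ω.S0 ω.S1 y (ω.j0, T0)
      = ((1 / (Real.sqrt 2 * Real.sqrt (2 ^ b)) : ℝ) : ℂ) * chi T0 (y ω.j0) := by
    intro T0 hT0
    unfold Qvec
    rw [if_pos ⟨rfl, Finset.mem_powerset.1 hT0⟩, if_neg (fun hc => hj hc.1), add_zero]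
  have hQ1 : ∀ T1 ∈ ω.S1.powerset, Qvec b ω.j0 ω.j1 ω.S0 ω.S1 y (ω.j1, T1)
      = ((1 / (Real.sqrt 2 * Real.sqrt (2 ^ b)) : ℝ) : ℂ) * chi T1 (y ω.j1) := by
    intro T1 hT1
    unfold Qvec
    rw [if_neg (fun hc => hj hc.1.symm), if_pos ⟨rfl, Finset.mem_powerset.1 hT1⟩, zero_add]
  have hterm : ∀ wch : Unit, True := fun _ => trivial
  have key : ∀ _ : Unit,
      (∑ T0 ∈ ω.S0.powerset, ∑ T1 ∈ ω.S1.powerset,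
        (((1 / (Real.sqrt 2 * Real.sqrt (2 ^ b)) : ℝ) : ℂ) * chi T0 (y ω.j0)) *
          (Fhat ω T0 T1 *
            (((1 / (Real.sqrt 2 * Real.sqrt (2 ^ b)) : ℝ) : ℂ) * chi T1 (y ω.j1))))
      = ((((2:ℝ) * 2 ^ b)⁻¹ : ℝ) : ℂ) *
          ∑ T0 ∈ ω.S0.powerset, ∑ T1 ∈ ω.S1.powerset,
            chi T0 (y ω.j0) * (Fhat ω T0 T1 * chi T1 (y ω.j1)) := by
    intro _
    rw [Finset.mul_sum]
    refine Finset.sum_congr rfl fun T0 _ => ?_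
    rw [Finset.mul_sum]
    refine Finset.sum_congr rfl fun T1 _ => ?_
    rw [← c_sq b]
    ring
  have e1 : (∑ T0 ∈ ω.S0.powerset, ∑ T1 ∈ ω.S1.powerset,
      (starRingEnd ℂ) (Qvec b ω.j0 ω.j1 ω.S0 ω.S1 y (ω.j0, T0)) *
        (Fhat ω T0 T1 * Qvec b ω.j0 ω.j1 ω.S0 ω.S1 y (ω.j1, T1)))
      = ((((2:ℝ) * 2 ^ b)⁻¹ : ℝ) : ℂ) *
          ∑ T0 ∈ ω.S0.powerset, ∑ T1 ∈ ω.S1.powerset,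
            chi T0 (y ω.j0) * (Fhat ω T0 T1 * chi T1 (y ω.j1)) := by
    rw [← key ()]
    refine Finset.sum_congr rfl fun T0 hT0 => Finset.sum_congr rfl fun T1 hT1 => ?_
    rw [starRingEnd_Qvec, hQ0 T0 hT0, hQ1 T1 hT1]
  have e2 : (∑ T0 ∈ ω.S0.powerset, ∑ T1 ∈ ω.S1.powerset,
      Qvec b ω.j0 ω.j1 ω.S0 ω.S1 y (ω.j0, T0) *
        (Fhat ω T0 T1 * (starRingEnd ℂ) (Qvec b ω.j0 ω.j1 ω.S0 ω.S1 y (ω.j1, T1))))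
      = ((((2:ℝ) * 2 ^ b)⁻¹ : ℝ) : ℂ) *
          ∑ T0 ∈ ω.S0.powerset, ∑ T1 ∈ ω.S1.powerset,
            chi T0 (y ω.j0) * (Fhat ω T0 T1 * chi T1 (y ω.j1)) := by
    rw [← key ()]
    refine Finset.sum_congr rfl fun T0 hT0 => Finset.sum_congr rfl fun T1 hT1 => ?_
    rw [starRingEnd_Qvec, hQ0 T0 hT0, hQ1 T1 hT1]
  rw [e1, e2, inversion ω ⟨hj, h0, h1, hdep⟩ (y ω.j0) (y ω.j1)]
  push_cast
  have h2b : ((2:ℂ) ^ b) ≠ 0 := by positivity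
  field_simp
  ring

end QSection

noncomputable section Assembly

variable {m ℓ : ℕ}

lemma helper_sum_mulVec {P : Type*} [Fintype P] {ι' : Type*} (s : Finset ι')
    (f : ι' → Matrix P P ℂ) (v : P → ℂ) :
    (∑ w ∈ s, f w) *ᵥ v = ∑ w ∈ s, f w *ᵥ v := by
  induction s using Finset.cons_induction with
  | empty => simp [Matrix.zero_mulVec]
  | cons a s ha ih => rw [Finset.sum_cons, Finset.sum_cons, Matrix.add_mulVec, ih]

lemma helper_dot_sum {P : Type*} [Fintype P] {ι' : Type*} (s : Finset ι')
    (u : P → ℂ) (f : ι' → P → ℂ) :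
    u ⬝ᵥ (∑ w ∈ s, f w) = ∑ w ∈ s, u ⬝ᵥ f w := by
  induction s using Finset.cons_induction with
  | empty => simp
  | cons a s ha ih => rw [Finset.sum_cons, Finset.sum_cons, dotProduct_add, ih]

lemma psd_zero {P : Type*} [Fintype P] [DecidableEq P] :
    (0 : Matrix P P ℂ).PosSemidef :=
  ⟨by simp [Matrix.IsHermitian], fun v => by simp⟩

lemma psd_smul {P : Type*} [Fintype P] {M : Matrix P P ℂ} (hM : M.PosSemidef)
    {r : ℝ} (hr : 0 ≤ r) : (((r : ℝ) : ℂ) • M).PosSemidef := by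
  rw [Matrix.posSemidef_iff_dotProduct_mulVec]
  constructor
  · unfold Matrix.IsHermitian
    rw [Matrix.conjTranspose_smul, hM.1]
    congr 1
    simp [RCLike.star_def, Complex.conj_ofReal]
  · intro v
    rw [Matrix.smul_mulVec, dotProduct_smul, smul_eq_mul]
    exact mul_nonneg (Complex.zero_le_real.2 hr) (hM.dotProduct_mulVec_nonneg v)

lemma psd_sum {P : Type*} [Fintype P] [DecidableEq P] {ι' : Type*} (s : Finset ι')
    (f : ι' → Matrix P P ℂ) (h : ∀ w ∈ s, (f w).PosSemidef) :
    (∑ w ∈ s, f w).PosSemidef := by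
  induction s using Finset.cons_induction with
  | empty => simpa using psd_zero
  | cons a s ha ih =>
      rw [Finset.sum_cons]
      exact (h a (Finset.mem_cons_self a s)).add
        (ih fun w hw => h w (Finset.mem_cons.2 (Or.inr hw)))

/-- the fiber of classical tuples over a quantum tuple -/
def fib (ω' : QTuple m ℓ) : Finset (DecTuple m ℓ) :=
  Finset.univ.filter (fun ω : DecTuple m ℓ => ω.toQ = ω')

/-- the averaged sign observable attached to a quantum tuple -/
def Gq (D : DecTuple m ℓ → ℝ) (ω' : QTuple m ℓ) :
    Matrix (Fin m × Finset (Fin ℓ)) (Fin m × Finset (Fin ℓ)) ℂ :=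
  (((∑ ω ∈ fib ω', D ω : ℝ)) : ℂ)⁻¹ • ∑ ω ∈ fib ω', ((D ω : ℝ) : ℂ) • Gmat ω

lemma toQ_fields {ω : DecTuple m ℓ} {ω' : QTuple m ℓ} (h : ω.toQ = ω') :
    ω'.j0 = ω.j0 ∧ ω'.j1 = ω.j1 ∧ ω'.S0 = ω.S0 ∧ ω'.S1 = ω.S1 := by
  subst h; exact ⟨rfl, rfl, rfl, rfl⟩

lemma sign_eq (xi : Bool) : (if xi then (1:ℂ) else -1) = ((Fval xi : ℝ) : ℂ) := by
  cases xi <;> simp [Fval]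

lemma term_eval {b : ℕ} (D : DecTuple m ℓ → ℝ) (hDnn : ∀ ω, 0 ≤ D ω)
    (hval : ∀ ω, D ω ≠ 0 → ω.Valid b) (ω' : QTuple m ℓ)
    (y : Fin m → Fin ℓ → Bool) (xi : Bool) :
    (∑ ω ∈ fib ω', D ω) *
      (star (Qvec b ω'.j0 ω'.j1 ω'.S0 ω'.S1 y) ⬝ᵥ
        (((2:ℂ)⁻¹ • ((1 : Matrix (Fin m × Finset (Fin ℓ)) (Fin m × Finset (Fin ℓ)) ℂ)
            + (if xi then (1:ℂ) else -1) • Gq D ω')) *ᵥ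
          Qvec b ω'.j0 ω'.j1 ω'.S0 ω'.S1 y)).re
    = (∑ ω ∈ fib ω', D ω) / 2
      + ((2:ℝ) ^ b)⁻¹ / 2 *
          ∑ ω ∈ fib ω', D ω * (Fval xi * Fval (ω.f (y ω.j0) (y ω.j1))) := by
  by_cases hz : (∑ ω ∈ fib ω', D ω) = 0
  · have hall : ∀ ω ∈ fib ω', D ω = 0 :=
      (Finset.sum_eq_zero_iff_of_nonneg (fun ω _ => hDnn ω)).1 hz
    rw [hz]
    rw [Finset.sum_congr rfl (fun ω hw => by rw [hall ω hw])]
    simp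
  · obtain ⟨ω₀, hmem₀, hne₀⟩ := Finset.exists_ne_zero_of_sum_ne_zero hz
    have htoQ : ω₀.toQ = ω' := (Finset.mem_filter.1 hmem₀).2
    subst htoQ
    obtain ⟨hj, hS0, hS1, hdep⟩ := hval ω₀ hne₀
    have hQn : star (Qvec b ω₀.toQ.j0 ω₀.toQ.j1 ω₀.toQ.S0 ω₀.toQ.S1 y) ⬝ᵥ
        Qvec b ω₀.toQ.j0 ω₀.toQ.j1 ω₀.toQ.S0 ω₀.toQ.S1 y = 1 :=
      Qvec_norm _ _ _ _ _ hj hS0 hS1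
    -- the G part
    have hG : star (Qvec b ω₀.toQ.j0 ω₀.toQ.j1 ω₀.toQ.S0 ω₀.toQ.S1 y) ⬝ᵥ
        (Gq D ω₀.toQ *ᵥ Qvec b ω₀.toQ.j0 ω₀.toQ.j1 ω₀.toQ.S0 ω₀.toQ.S1 y)
        = ((((∑ ω ∈ fib ω₀.toQ, D ω)⁻¹ *
            ((2:ℝ)^b)⁻¹ * ∑ ω ∈ fib ω₀.toQ, D ω * Fval (ω.f (y ω.j0) (y ω.j1)) : ℝ)) : ℂ) := by
      rw [Gq, Matrix.smul_mulVec, dotProduct_smul, helper_sum_mulVec,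
        helper_dot_sum]
      have hterm : ∀ ω ∈ fib ω₀.toQ,
          star (Qvec b ω₀.toQ.j0 ω₀.toQ.j1 ω₀.toQ.S0 ω₀.toQ.S1 y) ⬝ᵥ
            ((((D ω : ℝ) : ℂ) • Gmat ω) *ᵥ Qvec b ω₀.toQ.j0 ω₀.toQ.j1 ω₀.toQ.S0 ω₀.toQ.S1 y)
          = ((D ω * (((2:ℝ)^b)⁻¹ * Fval (ω.f (y ω.j0) (y ω.j1))) : ℝ) : ℂ) := by
        intro ω hw
        rw [Matrix.smul_mulVec, dotProduct_smul, smul_eq_mul]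
        by_cases hDw : D ω = 0
        · rw [hDw]; simp
        · have hvw := hval ω hDw
          have hfields := toQ_fields ((Finset.mem_filter.1 hw).2)
          rw [hfields.1, hfields.2.1, hfields.2.2.1, hfields.2.2.2]
          rw [Qvec_G ω hvw y]
          push_cast
          ring
      rw [Finset.sum_congr rfl hterm]
      rw [smul_eq_mul]
      push_cast
      rw [Finset.mul_sum, Finset.mul_sum]
      refine Finset.sum_congr rfl fun ω _ => ?_
      ring
    rw [Matrix.smul_mulVec, Matrix.add_mulVec, Matrix.one_mulVec,
      Matrix.smul_mulVec, dotProduct_smul, dotProduct_add,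
      dotProduct_smul, hQn, hG, smul_eq_mul, smul_eq_mul, sign_eq]
    have hre : ((2:ℂ)⁻¹ * (1 + ((Fval xi : ℝ) : ℂ) *
        ((((∑ ω ∈ fib ω₀.toQ, D ω)⁻¹ * ((2:ℝ)^b)⁻¹ *
          ∑ ω ∈ fib ω₀.toQ, D ω * Fval (ω.f (y ω.j0) (y ω.j1)) : ℝ)) : ℂ)))
        = (((2:ℝ)⁻¹ * (1 + Fval xi *
            ((∑ ω ∈ fib ω₀.toQ, D ω)⁻¹ * ((2:ℝ)^b)⁻¹ *
              ∑ ω ∈ fib ω₀.toQ, D ω * Fval (ω.f (y ω.j0) (y ω.j1)))) : ℝ) : ℂ) := by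
      push_cast
      ring
    rw [hre, Complex.ofReal_re]
    have hsum2 : ∑ ω ∈ fib ω₀.toQ, D ω * (Fval xi * Fval (ω.f (y ω.j0) (y ω.j1)))
        = Fval xi * ∑ ω ∈ fib ω₀.toQ, D ω * Fval (ω.f (y ω.j0) (y ω.j1)) := by
      rw [Finset.mul_sum]
      exact Finset.sum_congr rfl fun ω _ => by ring
    rw [hsum2]
    have h2b : ((2:ℝ)^b) ≠ 0 := by positivity
    field_simp

end Assembly

noncomputable section Assembly2

variable {m ℓ : ℕ}

/-- The POVM element attached to a quantum tuple. -/
def Emat (D : DecTuple m ℓ → ℝ) (ω' : QTuple m ℓ) (v : Bool) :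
    Matrix (Fin m × Finset (Fin ℓ)) (Fin m × Finset (Fin ℓ)) ℂ :=
  (2:ℂ)⁻¹ • (1 + (if v then (1:ℂ) else -1) • Gq D ω')

lemma E_psd {b : ℕ} (D : DecTuple m ℓ → ℝ) (hDnn : ∀ ω, 0 ≤ D ω)
    (hval : ∀ ω, D ω ≠ 0 → ω.Valid b) (ω' : QTuple m ℓ)
    (hz : (∑ ω ∈ fib ω', D ω) ≠ 0) (s : ℂ) (hs : s = 1 ∨ s = -1) :
    ((2:ℂ)⁻¹ • ((1 : Matrix (Fin m × Finset (Fin ℓ)) (Fin m × Finset (Fin ℓ)) ℂ)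
      + s • Gq D ω')).PosSemidef := by
  have hSnn : 0 ≤ ∑ ω ∈ fib ω', D ω := Finset.sum_nonneg fun ω _ => hDnn ω
  have hGq : Gq D ω' = (((∑ ω ∈ fib ω', D ω : ℝ)) : ℂ)⁻¹ •
      ∑ ω ∈ (fib ω').filter (fun ω => D ω ≠ 0), ((D ω : ℝ) : ℂ) • Gmat ω := by
    rw [Gq]
    congr 1
    refine (Finset.sum_filter_of_ne ?_).symm
    intro ω _ hfne hD0
    exact hfne (by rw [hD0]; simp)
  have hSsum : ∑ ω ∈ (fib ω').filter (fun ω => D ω ≠ 0), D ω = ∑ ω ∈ fib ω', D ω :=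
    Finset.sum_filter_ne_zero _
  have hcomb : (2:ℂ)⁻¹ • ((1 : Matrix (Fin m × Finset (Fin ℓ)) (Fin m × Finset (Fin ℓ)) ℂ)
        + s • Gq D ω')
      = ∑ ω ∈ (fib ω').filter (fun ω => D ω ≠ 0),
          ((D ω / (∑ ω ∈ fib ω', D ω) : ℝ) : ℂ) • ((2:ℂ)⁻¹ • (1 + s • Gmat ω)) := by
    rw [hGq]
    simp only [smul_add, Finset.sum_add_distrib, smul_smul, Finset.smul_sum]
    congr 1
    · rw [← Finset.sum_smul]
      have hones : ∑ ω ∈ (fib ω').filter (fun ω => D ω ≠ 0),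
          ((D ω / (∑ ω ∈ fib ω', D ω) : ℝ) : ℂ) * (2:ℂ)⁻¹ = (2:ℂ)⁻¹ := by
        rw [← Finset.sum_mul]
        have : ∑ ω ∈ (fib ω').filter (fun ω => D ω ≠ 0),
            ((D ω / (∑ ω ∈ fib ω', D ω) : ℝ) : ℂ)
            = (((∑ ω ∈ (fib ω').filter (fun ω => D ω ≠ 0), D ω)
                / (∑ ω ∈ fib ω', D ω) : ℝ) : ℂ) := by
          push_cast
          rw [Finset.sum_div]
        rw [this, hSsum, div_self hz]
        push_cast
        ring
      rw [hones]
    · refine Finset.sum_congr rfl fun ω _ => ?_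
      congr 1
      push_cast
      ring
  rw [hcomb]
  refine psd_sum _ _ fun ω hw => ?_
  exact psd_smul (core_psd ω (hval ω (Finset.mem_filter.1 hw).2) s hs)
    (div_nonneg (hDnn ω) hSnn)

lemma E_add (A : Matrix (Fin m × Finset (Fin ℓ)) (Fin m × Finset (Fin ℓ)) ℂ) :
    (2:ℂ)⁻¹ • ((1 : Matrix (Fin m × Finset (Fin ℓ)) (Fin m × Finset (Fin ℓ)) ℂ)
        + (-1:ℂ) • A)
      + (2:ℂ)⁻¹ • (1 + (1:ℂ) • A) = 1 := by
  rw [smul_add, smul_add, one_smul, neg_one_smul]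
  have h2 : (2:ℂ)⁻¹ • (1 : Matrix (Fin m × Finset (Fin ℓ)) (Fin m × Finset (Fin ℓ)) ℂ)
      + (2:ℂ)⁻¹ • (1 : Matrix (Fin m × Finset (Fin ℓ)) (Fin m × Finset (Fin ℓ)) ℂ) = 1 := by
    rw [← add_smul]
    norm_num
  calc (2:ℂ)⁻¹ • (1 : Matrix (Fin m × Finset (Fin ℓ)) (Fin m × Finset (Fin ℓ)) ℂ)
        + (2:ℂ)⁻¹ • (-A) + ((2:ℂ)⁻¹ • 1 + (2:ℂ)⁻¹ • A)
      = ((2:ℂ)⁻¹ • 1 + (2:ℂ)⁻¹ • 1) + ((2:ℂ)⁻¹ • (-A) + (2:ℂ)⁻¹ • A) := by abel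
    _ = 1 := by rw [h2, smul_neg, neg_add_cancel, add_zero]

lemma term_eval' {b : ℕ} (D : DecTuple m ℓ → ℝ) (hDnn : ∀ ω, 0 ≤ D ω)
    (hval : ∀ ω, D ω ≠ 0 → ω.Valid b) (ω' : QTuple m ℓ)
    (y : Fin m → Fin ℓ → Bool) (xi : Bool) :
    (∑ ω ∈ fib ω', D ω) *
      (star (Qvec b ω'.j0 ω'.j1 ω'.S0 ω'.S1 y) ⬝ᵥ
        (Emat D ω' xi *ᵥ Qvec b ω'.j0 ω'.j1 ω'.S0 ω'.S1 y)).re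
    = (∑ ω ∈ fib ω', D ω) / 2
      + ((2:ℝ) ^ b)⁻¹ / 2 *
          ∑ ω ∈ fib ω', D ω * (Fval xi * Fval (ω.f (y ω.j0) (y ω.j1))) :=
  term_eval D hDnn hval ω' y xi

end Assembly2

/-- a `(2, c, ε)`-smooth code using `b` bits is a `(1, c, ε/2^b)`-quantum
smooth code using `b` bits; moreover, for every index `i` and every classical smooth
decoder `D` there is a quantum decoder whose distribution over `(j0, j1, S0, S1)` is
exactly the one induced by `D`. -/
theorem stmt7 (n m ℓ b : ℕ) (c ε : ℝ)
    (C : (Fin n → Bool) → Fin m → Fin ℓ → Bool)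
    (h : IsSmoothCode n m ℓ b c ε C) :
    IsQSC n m ℓ b c (ε / 2 ^ b) C ∧
    ∀ (i : Fin n) (D : DecTuple m ℓ → ℝ), IsSmoothDecoder b c ε C i D →
      ∃ E : QTuple m ℓ → Bool →
          Matrix (Fin m × Finset (Fin ℓ)) (Fin m × Finset (Fin ℓ)) ℂ,
        IsQSCDecoder b c (ε / 2 ^ b) C i
          (fun ω' => ∑ ω ∈ Finset.univ.filter
            (fun ω : DecTuple m ℓ => ω.toQ = ω'), D ω) E := by
  have main : ∀ (i : Fin n) (D : DecTuple m ℓ → ℝ), IsSmoothDecoder b c ε C i D →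
      ∃ E : QTuple m ℓ → Bool →
          Matrix (Fin m × Finset (Fin ℓ)) (Fin m × Finset (Fin ℓ)) ℂ,
        IsQSCDecoder b c (ε / 2 ^ b) C i
          (fun ω' => ∑ ω ∈ Finset.univ.filter
            (fun ω : DecTuple m ℓ => ω.toQ = ω'), D ω) E := by
    intro i D hD
    obtain ⟨hDnn, hDsum, hDval, hDcorr, hDsm⟩ := hD
    refine ⟨Emat D, ?_, ?_, ?_, ?_, ?_⟩
    · -- nonneg
      intro ω'
      exact Finset.sum_nonneg fun ω _ => hDnn ω
    · -- total mass 1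
      have hmass := Finset.sum_fiberwise_eq_sum_filter
        (Finset.univ : Finset (DecTuple m ℓ)) (Finset.univ : Finset (QTuple m ℓ))
        DecTuple.toQ D
      simp only [Finset.mem_univ, Finset.filter_true] at hmass
      exact hmass.trans hDsum
    · -- POVM conditions
      intro ω' hne
      obtain ⟨ω₀, hmem₀, hne₀⟩ := Finset.exists_ne_zero_of_sum_ne_zero hne
      have htoQ : ω₀.toQ = ω' := (Finset.mem_filter.1 hmem₀).2
      obtain ⟨hj, h0, h1, -⟩ := hDval ω₀ hne₀
      obtain ⟨e0, e1, e2, e3⟩ := toQ_fields htoQ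
      have hfib : (∑ ω ∈ fib ω', D ω) ≠ 0 := hne
      refine ⟨by rw [e0, e1]; exact hj, by rw [e2]; exact h0, by rw [e3]; exact h1,
        ?_, ?_, ?_⟩
      · exact E_psd D hDnn hDval ω' hfib (-1) (Or.inr rfl)
      · exact E_psd D hDnn hDval ω' hfib 1 (Or.inl rfl)
      · exact E_add (Gq D ω')
    · -- success probability
      intro x
      have hsum_eq : (∑ ω' : QTuple m ℓ,
            (∑ ω ∈ Finset.univ.filter (fun ω : DecTuple m ℓ => ω.toQ = ω'), D ω) *
              (star (Qvec b ω'.j0 ω'.j1 ω'.S0 ω'.S1 (C x)) ⬝ᵥ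
                (Emat D ω' (x i) *ᵥ Qvec b ω'.j0 ω'.j1 ω'.S0 ω'.S1 (C x))).re)
          = ∑ ω' : QTuple m ℓ,
              ((∑ ω ∈ Finset.univ.filter (fun ω : DecTuple m ℓ => ω.toQ = ω'), D ω) / 2
                + ((2:ℝ) ^ b)⁻¹ / 2 *
                  ∑ ω ∈ Finset.univ.filter (fun ω : DecTuple m ℓ => ω.toQ = ω'),
                    D ω * (Fval (x i) * Fval (ω.f (C x ω.j0) (C x ω.j1)))) :=
        Finset.sum_congr rfl fun ω' _ => term_eval' D hDnn hDval ω' (C x) (x i)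
      refine le_trans ?_ hsum_eq.ge
      rw [Finset.sum_add_distrib, ← Finset.sum_div, ← Finset.mul_sum]
      have hmass := Finset.sum_fiberwise_eq_sum_filter
        (Finset.univ : Finset (DecTuple m ℓ)) (Finset.univ : Finset (QTuple m ℓ))
        DecTuple.toQ D
      simp only [Finset.mem_univ, Finset.filter_true] at hmass
      rw [hmass, hDsum]
      have hfib2 := Finset.sum_fiberwise_eq_sum_filter
        (Finset.univ : Finset (DecTuple m ℓ)) (Finset.univ : Finset (QTuple m ℓ))
        DecTuple.toQ (fun ω => D ω * (Fval (x i) * Fval (ω.f (C x ω.j0) (C x ω.j1))))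
      simp only [Finset.mem_univ, Finset.filter_true] at hfib2
      rw [hfib2]
      have hsgn : ∀ ω : DecTuple m ℓ,
          D ω * (Fval (x i) * Fval (ω.f (C x ω.j0) (C x ω.j1)))
          = (if ω.f (C x ω.j0) (C x ω.j1) = x i then D ω else -D ω) := by
        intro ω
        rcases hxi : x i <;> rcases hf : ω.f (C x ω.j0) (C x ω.j1) <;>
          simp [Fval, hxi, hf]
      rw [Finset.sum_congr rfl fun ω _ => hsgn ω, Finset.sum_ite]
      have hsplit := Finset.sum_filter_add_sum_filter_not Finset.univ
        (fun ω : DecTuple m ℓ => ω.f (C x ω.j0) (C x ω.j1) = x i) D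
      rw [hDsum] at hsplit
      have hc := hDcorr x
      have key1 : 2 * ε ≤
          (∑ ω ∈ Finset.univ.filter
              (fun ω : DecTuple m ℓ => ω.f (C x ω.j0) (C x ω.j1) = x i), D ω)
          - ∑ ω ∈ Finset.univ.filter
              (fun ω : DecTuple m ℓ => ¬ ω.f (C x ω.j0) (C x ω.j1) = x i), D ω := by
        linarith
      have hκ : (0:ℝ) ≤ ((2:ℝ) ^ b)⁻¹ / 2 := by positivity
      have key2 := mul_le_mul_of_nonneg_left key1 hκ
      have key3 : ((2:ℝ) ^ b)⁻¹ / 2 * (2 * ε) = ε / 2 ^ b := by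
        have : ((2:ℝ) ^ b) ≠ 0 := by positivity
        field_simp
      have hneg : ∑ ω ∈ Finset.univ.filter
            (fun ω : DecTuple m ℓ => ¬ ω.f (C x ω.j0) (C x ω.j1) = x i), -D ω
          = - ∑ ω ∈ Finset.univ.filter
            (fun ω : DecTuple m ℓ => ¬ ω.f (C x ω.j0) (C x ω.j1) = x i), D ω := by
        exact Finset.sum_neg_distrib D
      rw [hneg]
      linarith
    · -- smoothness
      intro j
      have hfibS := Finset.sum_fiberwise_eq_sum_filter
        (Finset.univ : Finset (DecTuple m ℓ))
        (Finset.univ.filter (fun ω' : QTuple m ℓ => ω'.j0 = j ∨ ω'.j1 = j))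
        DecTuple.toQ D
      have hfilter : Finset.univ.filter (fun ω : DecTuple m ℓ =>
            ω.toQ ∈ Finset.univ.filter (fun ω' : QTuple m ℓ => ω'.j0 = j ∨ ω'.j1 = j))
          = Finset.univ.filter (fun ω : DecTuple m ℓ => ω.j0 = j ∨ ω.j1 = j) := by
        apply Finset.filter_congr
        intro ω _
        simp [DecTuple.toQ]
      have h2 : (∑ ω ∈ Finset.univ.filter (fun ω : DecTuple m ℓ =>
            ω.toQ ∈ Finset.univ.filter (fun ω' : QTuple m ℓ => ω'.j0 = j ∨ ω'.j1 = j)), D ω)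
          = ∑ ω ∈ Finset.univ.filter (fun ω : DecTuple m ℓ => ω.j0 = j ∨ ω.j1 = j), D ω := by
        rw [hfilter]
      exact le_trans (le_of_eq (hfibS.trans h2)) (hDsm j)
  refine ⟨?_, main⟩
  intro i
  obtain ⟨D, hD⟩ := h i
  obtain ⟨E, hE⟩ := main i D hD
  exact ⟨_, E, hE⟩
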